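/- Let K be a field, f ∈ K[x] a monic irreducible polynomial, and X ∈ Mat_n(K) a matrix whose minimal polynomial over K equals f^m for some m ≥ 2. Let r ∈ K[x]. Then r(X) is similar to f(X) if and only if f divides r and f² does not divide r. -/

import Mathlib

open Polynomial DirectSum

namespace SimilarAux

variable {K : Type*} [Field K]

lemma digits_unique (f : K[X]) (hirr : Irreducible f) :
    ∀ (e : ℕ) (g s : ℕ → K[X]), (∀ i, (g i).degree < f.degree) → (∀ i, ¬ f ∣ s i) →
      f ^ e ∣ ∑ i ∈ Finset.range e, g i * s i * f ^ i → ∀ i < e, g i = 0 := by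
  intro e
  induction e with
  | zero => intro g s hg hs hdvd i hi; omega
  | succ e ih =>
    intro g s hg hs hdvd i hi
    have hf0 : f ≠ 0 := hirr.ne_zero
    have hsum : ∑ i ∈ Finset.range (e + 1), g i * s i * f ^ i
        = g 0 * s 0 + f * ∑ i ∈ Finset.range e, g (i + 1) * s (i + 1) * f ^ i := by
      rw [Finset.sum_range_succ', Finset.mul_sum, add_comm]
      simp only [pow_zero, mul_one]
      congr 1
      apply Finset.sum_congr rfl; intro j hj; ring
    have hg0 : g 0 = 0 := by
      have h1 : f ∣ g 0 * s 0 := by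
        have : f ∣ ∑ i ∈ Finset.range (e + 1), g i * s i * f ^ i :=
          dvd_trans (dvd_pow_self f (Nat.succ_ne_zero e)) hdvd
        rw [hsum] at this
        exact (dvd_add_right (Dvd.intro _ rfl)).mp (by rwa [add_comm] at this)
      have h2 : f ∣ g 0 := (hirr.prime.dvd_mul.mp h1).resolve_right (hs 0)
      exact eq_zero_of_dvd_of_degree_lt h2 (hg 0)
    rcases i with _ | j
    · exact hg0
    · have hdvd' : f ^ e ∣ ∑ i ∈ Finset.range e, g (i + 1) * s (i + 1) * f ^ i := by
        have : f ^ (e + 1) ∣ f * ∑ i ∈ Finset.range e, g (i + 1) * s (i + 1) * f ^ i := by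
          rwa [hsum, hg0, zero_mul, zero_add] at hdvd
        rw [pow_succ'] at this
        exact (mul_dvd_mul_iff_left hf0).mp this
      exact ih (fun i => g (i + 1)) (fun i => s (i + 1)) (fun i => hg _) (fun i => hs _) hdvd' j (by omega)

lemma digits_exist (f : K[X]) (hmonic : f.Monic) (hirr : Irreducible f) :
    ∀ (e : ℕ) (s : ℕ → K[X]), (∀ i, ¬ f ∣ s i) → ∀ q : K[X],
      ∃ g : ℕ → K[X], (∀ i, (g i).degree < f.degree) ∧
        f ^ e ∣ q - ∑ i ∈ Finset.range e, g i * s i * f ^ i := by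
  intro e
  induction e with
  | zero => intro s hs q; exact ⟨0, fun i => by
      exact lt_of_le_of_lt (by simp) (degree_pos_of_irreducible hirr), by simp⟩
  | succ e ih =>
    intro s hs q
    have hf0 : f ≠ 0 := hirr.ne_zero
    obtain ⟨u, v, huv⟩ := (hirr.coprime_iff_not_dvd.mpr (hs 0) : IsCoprime f (s 0))
    set g0 : K[X] := (q * v) %ₘ f with hg0def
    have hg0deg : g0.degree < f.degree := degree_modByMonic_lt _ hmonic
    have hdvd0 : f ∣ q - g0 * s 0 := by
      have hmod : q * v - g0 = f * (q * v /ₘ f) := by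
        rw [hg0def]
        have h := modByMonic_add_div (q * v) f
        linear_combination -h
      have : q - g0 * s 0 = (q * v - g0) * s 0 + q * (1 - v * s 0) := by ring
      rw [this, hmod]
      have h1 : 1 - v * s 0 = u * f := by linear_combination -huv
      rw [h1]
      exact dvd_add ⟨(q * v /ₘ f) * s 0, by ring⟩ ⟨q * u, by ring⟩
    obtain ⟨q', hq'⟩ := hdvd0
    obtain ⟨g', hg'deg, hg'dvd⟩ := ih (fun i => s (i + 1)) (fun i => hs _) q'
    refine ⟨fun i => match i with | 0 => g0 | (j+1) => g' j, fun i => by cases i <;> simp [hg0deg, hg'deg _], ?_⟩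
    have hsum : ∑ i ∈ Finset.range (e + 1),
          (match i with | 0 => g0 | (j+1) => g' j) * s i * f ^ i
        = g0 * s 0 + f * ∑ i ∈ Finset.range e, g' i * s (i + 1) * f ^ i := by
      rw [Finset.sum_range_succ', Finset.mul_sum, add_comm]
      simp only [pow_zero, mul_one]
      congr 1
      apply Finset.sum_congr rfl; intro j hj; ring
    rw [hsum]
    have : q - (g0 * s 0 + f * ∑ i ∈ Finset.range e, g' i * s (i + 1) * f ^ i)
        = f * (q' - ∑ i ∈ Finset.range e, g' i * s (i + 1) * f ^ i) := by
      rw [mul_sub, ← hq']; ring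
    rw [this, pow_succ']
    exact mul_dvd_mul_left f hg'dvd

lemma mk_eq_zero_iff_dvd (f : K[X]) (e : ℕ) (q : K[X]) :
    (Submodule.Quotient.mk q : K[X] ⧸ (Submodule.span K[X] {f^e} : Submodule K[X] K[X])) = 0
      ↔ f^e ∣ q := by
  rw [Submodule.Quotient.mk_eq_zero, Submodule.mem_span_singleton]
  constructor
  · rintro ⟨a, ha⟩; exact ⟨a, by rw [← ha, smul_eq_mul]; ring⟩
  · rintro ⟨a, ha⟩; exact ⟨a, by rw [ha, smul_eq_mul]; ring⟩

noncomputable def mkl (f : K[X]) (e : ℕ) :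
    K[X] →ₗ[K] (K[X] ⧸ (Submodule.span K[X] {f^e} : Submodule K[X] K[X])) :=
  ((Submodule.span K[X] {f^e}).mkQ).restrictScalars K

lemma mkl_apply (f : K[X]) (e : ℕ) (q : K[X]) : mkl f e q = Submodule.Quotient.mk q := rfl

lemma smul_mk (f : K[X]) (e : ℕ) (p q : K[X]) :
    (p • Submodule.Quotient.mk q : K[X] ⧸ (Submodule.span K[X] {f^e} : Submodule K[X] K[X]))
      = Submodule.Quotient.mk (p * q) := by
  rw [← Submodule.Quotient.mk_smul]; rfl

lemma twisted_li (f : K[X]) (hmonic : f.Monic) (hirr : Irreducible f)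
    (s : ℕ → K[X]) (hs : ∀ i, ¬ f ∣ s i) (e : ℕ) :
    LinearIndependent K (fun p : Fin e × Fin f.natDegree =>
      (Submodule.Quotient.mk (X^(p.2 : ℕ) * s p.1 * f^(p.1 : ℕ)) :
        K[X] ⧸ (Submodule.span K[X] {f^e} : Submodule K[X] K[X]))) := by
  classical
  have hf0 : f ≠ 0 := hirr.ne_zero
  set d := f.natDegree with hdder
  have hd : 0 < d := natDegree_pos_iff_degree_pos.mpr (degree_pos_of_irreducible hirr)
  have hdeg : f.degree = (d : WithBot ℕ) := degree_eq_natDegree hf0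
  rw [Fintype.linearIndependent_iff]
  intro c hc p
  set G : ℕ → K[X] := fun i => if h : i < e then ∑ a : Fin d, C (c (⟨i, h⟩, a)) * X^(a:ℕ) else 0
    with hG
  have hsum : ∑ p : Fin e × Fin d, c p • (X^(p.2 : ℕ) * s p.1 * f^(p.1 : ℕ))
      = ∑ i ∈ Finset.range e, G i * s i * f ^ i := by
    rw [Fintype.sum_prod_type]
    rw [Finset.sum_range fun i => G i * s i * f ^ i]
    apply Finset.sum_congr rfl
    intro i _
    simp only [hG, i.isLt, dif_pos]
    rw [Finset.sum_mul, Finset.sum_mul]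
    apply Finset.sum_congr rfl
    intro a _
    rw [smul_eq_C_mul]; ring
  have hzero : f ^ e ∣ ∑ i ∈ Finset.range e, G i * s i * f ^ i := by
    rw [← hsum, ← mk_eq_zero_iff_dvd, ← mkl_apply, map_sum, ← hc]
    apply Finset.sum_congr rfl
    intro p _
    rw [map_smul, mkl_apply]
  have hGdeg : ∀ i, (G i).degree < f.degree := by
    intro i
    simp only [hG]
    split_ifs with h
    · refine lt_of_le_of_lt (degree_sum_le _ _) ?_
      rw [hdeg, Finset.sup_lt_iff (by exact WithBot.bot_lt_coe d)]
      intro a _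
      exact lt_of_le_of_lt (degree_C_mul_X_pow_le _ _) (by exact_mod_cast a.isLt)
    · exact lt_of_le_of_lt (by simp) (degree_pos_of_irreducible hirr)
  have hGzero := digits_unique f hirr e G s hGdeg hs hzero
  have hGp : G (p.1 : ℕ) = 0 := hGzero p.1 p.1.isLt
  have hcoeff : (G (p.1 : ℕ)).coeff (p.2 : ℕ) = c p := by
    simp only [hG, p.1.isLt, dif_pos]
    rw [finset_sum_coeff]
    rw [Finset.sum_eq_single p.2]
    · simp [coeff_C_mul, coeff_X_pow]
    · intro b _ hb
      simp only [coeff_C_mul, coeff_X_pow]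
      rw [if_neg (by simpa [Fin.val_eq_val] using (by exact fun h => hb h.symm : ¬ (p.2 = b)))]
      ring
    · simp
  rw [hGp] at hcoeff; simpa using hcoeff.symm

lemma twisted_span (f : K[X]) (hmonic : f.Monic) (hirr : Irreducible f)
    (s : ℕ → K[X]) (hs : ∀ i, ¬ f ∣ s i) (e : ℕ) :
    ⊤ ≤ Submodule.span K (Set.range (fun p : Fin e × Fin f.natDegree =>
      (Submodule.Quotient.mk (X^(p.2 : ℕ) * s p.1 * f^(p.1 : ℕ)) :
        K[X] ⧸ (Submodule.span K[X] {f^e} : Submodule K[X] K[X])))) := by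
  classical
  have hf0 : f ≠ 0 := hirr.ne_zero
  set d := f.natDegree with hdder
  have hd : 0 < d := natDegree_pos_iff_degree_pos.mpr (degree_pos_of_irreducible hirr)
  have hdeg : f.degree = (d : WithBot ℕ) := degree_eq_natDegree hf0
  rintro z -
  obtain ⟨q, rfl⟩ := Submodule.Quotient.mk_surjective _ z
  obtain ⟨g, hgdeg, hgdvd⟩ := digits_exist f hmonic hirr e s hs q
  have hmkeq : (Submodule.Quotient.mk q :
        K[X] ⧸ (Submodule.span K[X] {f^e} : Submodule K[X] K[X]))
      = Submodule.Quotient.mk (∑ i ∈ Finset.range e, g i * s i * f ^ i) := by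
    rw [← sub_eq_zero, ← Submodule.Quotient.mk_sub]
    exact (mk_eq_zero_iff_dvd f e _).mpr hgdvd
  rw [hmkeq, ← mkl_apply, map_sum]
  apply Submodule.sum_mem
  intro i hi
  have hgi : (g i).natDegree < d := by
    rcases eq_or_ne (g i) 0 with h0 | h0
    · simpa [h0] using hd
    · exact natDegree_lt_natDegree h0 (hgdeg i)
  have hrepr : g i = ∑ a ∈ Finset.range d, C ((g i).coeff a) * X ^ a := by
    conv_lhs => rw [as_sum_range' (g i) d hgi]
    apply Finset.sum_congr rfl
    intro a _
    rw [C_mul_X_pow_eq_monomial]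
  rw [hrepr]
  rw [Finset.sum_mul, Finset.sum_mul, map_sum]
  apply Submodule.sum_mem
  intro a ha
  have : C ((g i).coeff a) * X ^ a * s i * f ^ i = ((g i).coeff a) • (X ^ a * s i * f ^ i) := by
    rw [smul_eq_C_mul]; ring
  rw [this, map_smul]
  apply Submodule.smul_mem
  apply Submodule.subset_span
  exact ⟨(⟨i, Finset.mem_range.mp hi⟩, ⟨a, Finset.mem_range.mp ha⟩), rfl⟩

/-- The twisted monomial family is a `K`-basis of `K[X] ⧸ (f ^ e)`. -/
noncomputable def twistedBasis (f : K[X]) (hmonic : f.Monic) (hirr : Irreducible f)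
    (s : ℕ → K[X]) (hs : ∀ i, ¬ f ∣ s i) (e : ℕ) :
    Module.Basis (Fin e × Fin f.natDegree) K
      (K[X] ⧸ (Submodule.span K[X] {f^e} : Submodule K[X] K[X])) :=
  Module.Basis.mk (twisted_li f hmonic hirr s hs e) (twisted_span f hmonic hirr s hs e)

lemma twistedBasis_apply (f : K[X]) (hmonic : f.Monic) (hirr : Irreducible f)
    (s : ℕ → K[X]) (hs : ∀ i, ¬ f ∣ s i) (e : ℕ) (p : Fin e × Fin f.natDegree) :
    twistedBasis f hmonic hirr s hs e p
      = Submodule.Quotient.mk (X^(p.2 : ℕ) * s p.1 * f^(p.1 : ℕ)) :=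
  Module.Basis.mk_apply _ _ _

lemma component_equiv (f : K[X]) (hmonic : f.Monic) (hirr : Irreducible f)
    (s : K[X]) (hs : ¬ f ∣ s) (e : ℕ) :
    ∃ ψ : (K[X] ⧸ (Submodule.span K[X] {f^e} : Submodule K[X] K[X])) ≃ₗ[K]
          (K[X] ⧸ (Submodule.span K[X] {f^e} : Submodule K[X] K[X])),
      ∀ q, ψ (f • q) = (f * s) • ψ q := by
  have hone : ∀ i : ℕ, ¬ f ∣ (fun _ : ℕ => (1:K[X])) i :=
    fun i h => hirr.not_isUnit (isUnit_of_dvd_one h)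
  have hpow : ∀ i : ℕ, ¬ f ∣ ((fun i => s ^ i) i) :=
    fun i h => hs (hirr.prime.dvd_of_dvd_pow h)
  set b := twistedBasis f hmonic hirr (fun _ => 1) hone e with hb
  set b' := twistedBasis f hmonic hirr (fun i => s ^ i) hpow e with hb'
  set ψ := b.equiv b' (Equiv.refl _) with hψ
  refine ⟨ψ, ?_⟩
  set Q := K[X] ⧸ (Submodule.span K[X] {f^e} : Submodule K[X] K[X])
  set μf : Q →ₗ[K] Q := (LinearMap.lsmul K[X] Q f).restrictScalars K with hμf
  set μr : Q →ₗ[K] Q := (LinearMap.lsmul K[X] Q (f * s)).restrictScalars K with hμr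
  have key : ψ.toLinearMap ∘ₗ μf = μr ∘ₗ ψ.toLinearMap := by
    apply b.ext
    intro p
    obtain ⟨i, a⟩ := p
    have hbe : ∀ p, ψ (b p) = b' p := fun p => by
      rw [hψ, Module.Basis.equiv_apply]; rfl
    show ψ (f • b (i, a)) = (f * s) • ψ (b (i, a))
    rw [hbe, hb, hb', twistedBasis_apply, twistedBasis_apply, smul_mk, smul_mk]
    rcases lt_or_eq_of_le (Nat.succ_le_of_lt i.isLt) with h | h
    · have h1 : f * (X^(a:ℕ) * 1 * f^(i:ℕ)) = X^(a:ℕ) * 1 * f^((i:ℕ)+1) := by ring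
      rw [h1]
      have h2 : (Submodule.Quotient.mk (X^(a:ℕ) * 1 * f^((i:ℕ)+1)) : Q)
          = b (⟨(i:ℕ)+1, h⟩, a) := by rw [hb, twistedBasis_apply]
      rw [h2, hbe, hb', twistedBasis_apply]
      congr 1
      ring
    · -- i + 1 = e : both sides are zero
      have hpoweq : f^e = f^((i:ℕ)+1) := by congr 1; omega
      have hL : (Submodule.Quotient.mk (f * (X^(a:ℕ) * 1 * f^(i:ℕ))) : Q) = 0 := by
        rw [mk_eq_zero_iff_dvd]
        exact ⟨X^(a:ℕ), by rw [hpoweq, pow_succ]; ring⟩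
      have hR : (Submodule.Quotient.mk (f * s * (X^(a:ℕ) * s^(i:ℕ) * f^(i:ℕ))) : Q) = 0 := by
        rw [mk_eq_zero_iff_dvd]
        exact ⟨X^(a:ℕ) * s^((i:ℕ)+1), by rw [hpoweq, pow_succ]; ring⟩
      rw [hL, hR, map_zero]
  intro q
  have := LinearMap.congr_fun key q
  exact this

lemma directSum_equiv {ι : Type*} [DecidableEq ι] (f : K[X]) (hmonic : f.Monic)
    (hirr : Irreducible f) (s : K[X]) (hs : ¬ f ∣ s) (e : ι → ℕ) :
    ∃ Ψ : (⨁ (i : ι), K[X] ⧸ (Submodule.span K[X] {f ^ e i} : Submodule K[X] K[X])) ≃ₗ[K]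
          (⨁ (i : ι), K[X] ⧸ (Submodule.span K[X] {f ^ e i} : Submodule K[X] K[X])),
      ∀ w, Ψ (f • w) = (f * s) • Ψ w := by
  choose ψ hψ using fun i => component_equiv f hmonic hirr s hs (e i)
  refine ⟨DFinsupp.mapRange.linearEquiv ψ, ?_⟩
  intro w
  refine DFinsupp.ext fun j => ?_
  rw [DirectSum.smul_apply]; erw [DFinsupp.mapRange.linearEquiv_apply, DFinsupp.mapRange.linearEquiv_apply, DFinsupp.mapRange_apply, DFinsupp.mapRange_apply]; erw [DFinsupp.mapRange_apply]; rw [hψ]; exact fun _ => smul_zero _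

end SimilarAux

open SimilarAux

def Matrix.Similar {K : Type*} [Field K] {n : ℕ} (A B : Matrix (Fin n) (Fin n) K) : Prop :=
  ∃ g : (Matrix (Fin n) (Fin n) K)ˣ,
    (↑g⁻¹ : Matrix (Fin n) (Fin n) K) * A * (↑g : Matrix (Fin n) (Fin n) K) = B

set_option maxHeartbeats 1000000 in
set_option synthInstance.maxHeartbeats 200000 in
theorem aeval_similar_iff_dvd_not_sq_dvd
    (K : Type*) [Field K] (n : ℕ) (X : Matrix (Fin n) (Fin n) K)
    (f : Polynomial K) (hmonic : f.Monic) (hirr : Irreducible f)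
    (m : ℕ) (hm : 2 ≤ m) (hmin : minpoly K X = f ^ m)
    (r : Polynomial K) :
    (Polynomial.aeval X r).Similar (Polynomial.aeval X f) ↔ (f ∣ r ∧ ¬ f ^ 2 ∣ r) := by
  have hf0 : f ≠ 0 := hirr.ne_zero
  constructor
  · rintro ⟨g, hg⟩
    set R := Polynomial.aeval X r with hR
    set F := Polynomial.aeval X f with hF
    set G : Matrix (Fin n) (Fin n) K := ↑g with hG
    set G' : Matrix (Fin n) (Fin n) K := ↑(g⁻¹) with hG'
    have hGG' : G * G' = 1 := g.mul_inv
    have hG'G : G' * G = 1 := g.inv_mul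
    have hg' : R * G = G * F := by
      rw [← hg, mul_assoc, ← mul_assoc G G', hGG', one_mul]
    have hconj : ∀ k : ℕ, R ^ k * G = G * F ^ k := by
      intro k
      induction k with
      | zero => rw [pow_zero, pow_zero, one_mul, mul_one]
      | succ k ih =>
        rw [pow_succ, pow_succ, mul_assoc, hg', ← mul_assoc, ih, mul_assoc]
    have hfm : Polynomial.aeval X (f ^ m) = 0 := by rw [← hmin]; exact minpoly.aeval K X
    have hFm : F ^ m = 0 := by rw [hF, ← map_pow, hfm]
    have hrm : Polynomial.aeval X (r ^ m) = 0 := by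
      rw [map_pow, ← hR]
      calc R ^ m = R ^ m * (G * G') := by rw [hGG', mul_one]
        _ = (R ^ m * G) * G' := by rw [mul_assoc]
        _ = 0 := by rw [hconj, hFm, mul_zero, zero_mul]
    have hdvd : f ∣ r := by
      have h1 : minpoly K X ∣ r ^ m := minpoly.dvd K X hrm
      rw [hmin] at h1
      have h2 : f ∣ r ^ m := dvd_trans (dvd_pow_self f (by omega)) h1
      exact hirr.prime.dvd_of_dvd_pow h2
    refine ⟨hdvd, fun hsq => ?_⟩
    have h3 : f ^ m ∣ r ^ (m - 1) := by
      have h := pow_dvd_pow_of_dvd hsq (m - 1)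
      rw [← pow_mul] at h
      exact dvd_trans (pow_dvd_pow f (by omega)) h
    have hRm1 : R ^ (m-1) = 0 := by
      obtain ⟨c, hc⟩ := h3
      rw [hR, ← map_pow, hc, map_mul, hfm, zero_mul]
    have hfm1 : Polynomial.aeval X (f ^ (m-1)) = 0 := by
      rw [map_pow, ← hF]
      calc F ^ (m-1) = (G' * G) * F ^ (m-1) := by rw [hG'G, one_mul]
        _ = G' * (R ^ (m-1) * G) := by rw [mul_assoc, hconj]
        _ = 0 := by rw [hRm1, zero_mul, mul_zero]
    have h4 : minpoly K X ∣ f ^ (m-1) := minpoly.dvd K X hfm1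
    rw [hmin] at h4
    have h5 : f ^ (m-1) * f ∣ f ^ (m-1) * 1 := by
      rw [mul_one, ← pow_succ]
      exact dvd_trans (pow_dvd_pow f (by omega)) h4
    have h6 : f ∣ 1 := (mul_dvd_mul_iff_left (pow_ne_zero _ hf0)).mp h5
    exact hirr.not_isUnit (isUnit_of_dvd_one h6)
  · rintro ⟨⟨s, rfl⟩, hnsq⟩
    classical
    have hs : ¬ f ∣ s := fun h => hnsq (by rw [pow_two]; exact mul_dvd_mul_left f h)
    set V := (Fin n → K)
    set T := (Matrix.toLinAlgEquiv' : Matrix (Fin n) (Fin n) K ≃ₐ[K] (V →ₗ[K] V)) with hT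
    set φ : Module.End K V := T X with hφ
    have haeval : ∀ p : K[X], Polynomial.aeval φ p = T (Polynomial.aeval X p) := fun p =>
      Polynomial.aeval_algHom_apply (T : Matrix (Fin n) (Fin n) K →ₐ[K] (V →ₗ[K] V)) X p
    have hkill : ∀ v : Module.AEval' φ, (f ^ m : K[X]) • v = 0 := by
      intro v
      apply (Module.AEval.of K V φ).symm.injective
      rw [map_zero, Module.AEval.of_symm_smul]
      have h0 : Polynomial.aeval φ (f ^ m) = 0 := by
        rw [haeval, ← hmin, minpoly.aeval, map_zero]
      rw [h0, zero_smul]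
    have htor : Module.IsTorsion K[X] (Module.AEval' φ) := fun v =>
      ⟨⟨f ^ m, mem_nonZeroDivisors_of_ne_zero (pow_ne_zero m hf0)⟩, hkill v⟩
    obtain ⟨ι, hfin, p, hp, e, ⟨E⟩⟩ :=
      Module.equiv_directSum_of_isTorsion (R := K[X]) (M := Module.AEval' φ) htor
    have hspan : ∀ i, (Submodule.span K[X] {p i ^ e i} : Submodule K[X] K[X])
        = Submodule.span K[X] {f ^ e i} := by
      intro i
      rcases Nat.eq_zero_or_pos (e i) with h0 | hpos
      · rw [h0, pow_zero, pow_zero]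
      · have hPdvd : (p i ^ e i : K[X]) ∣ f ^ m := by
          set w := DirectSum.lof K[X] ι
            (fun j => K[X] ⧸ (Submodule.span K[X] {p j ^ e j} : Submodule K[X] K[X])) i
            (Submodule.Quotient.mk 1) with hw
          have h1 : (f ^ m : K[X]) • w = 0 := by
            have h2 := hkill (E.symm w)
            have h3 := congrArg E h2
            rw [map_smul, map_zero, E.apply_symm_apply] at h3
            exact h3
          have h4 : (f ^ m : K[X]) • w = DirectSum.lof K[X] ι
              (fun j => K[X] ⧸ (Submodule.span K[X] {p j ^ e j} : Submodule K[X] K[X])) i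
              ((f ^ m : K[X]) • Submodule.Quotient.mk 1) := by
            rw [hw, map_smul]
          rw [h4] at h1
          have h5 := congrArg (fun z => z i) h1
          simp only [DirectSum.lof_apply, DirectSum.zero_apply] at h5
          have h6 : ((f ^ m : K[X]) • (Submodule.Quotient.mk 1) :
              K[X] ⧸ (Submodule.span K[X] {p i ^ e i} : Submodule K[X] K[X])) =
              Submodule.Quotient.mk (f ^ m) := by
            rw [← Submodule.Quotient.mk_smul, smul_eq_mul, mul_one]
          rw [h6] at h5
          have h7 : (f ^ m : K[X]) ∈ (Submodule.span K[X] {p i ^ e i} : Submodule K[X] K[X]) :=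
            (Submodule.Quotient.mk_eq_zero _).mp h5
          obtain ⟨a, ha⟩ := Submodule.mem_span_singleton.mp h7
          exact ⟨a, by rw [← ha, smul_eq_mul, mul_comm]⟩
        have hpdvdf : p i ∣ f :=
          (hp i).prime.dvd_of_dvd_pow
            (dvd_trans (dvd_pow_self _ (Nat.pos_iff_ne_zero.mp hpos)) hPdvd)
        have hassoc : Associated (p i ^ e i) (f ^ e i) :=
          ((hp i).associated_of_dvd hirr hpdvdf).pow_pow
        exact Ideal.span_singleton_eq_span_singleton.mpr hassoc
    set E' : Module.AEval' φ ≃ₗ[K[X]]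
        ⨁ (i : ι), K[X] ⧸ (Submodule.span K[X] {f ^ e i} : Submodule K[X] K[X]) :=
      E.trans (DFinsupp.mapRange.linearEquiv
        (fun i => Submodule.quotEquivOfEq _ _ (hspan i))) with hE'
    obtain ⟨Ψ, hΨ⟩ := directSum_equiv (ι := ι) f hmonic hirr s hs e
    set EK := E'.restrictScalars K with hEK
    set g : V ≃ₗ[K] V :=
      ((Module.AEval.of K V φ).trans (EK.trans (Ψ.trans (EK.symm.trans
        (Module.AEval.of K V φ).symm)))) with hgdef
    have hgkey : ∀ v : V,
        g ((Polynomial.aeval φ f) v) = (Polynomial.aeval φ (f * s)) (g v) := by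
      intro v
      have s1 : (Module.AEval.of K V φ) ((Polynomial.aeval φ f) v)
          = (f : K[X]) • (Module.AEval.of K V φ) v :=
        Module.AEval.of_aeval_smul φ f v
      have s2 : ∀ x, EK ((f : K[X]) • x) = (f : K[X]) • EK x := fun x => E'.map_smul f x
      have s3 : ∀ w, EK.symm ((f * s : K[X]) • w) = (f * s : K[X]) • EK.symm w :=
        fun w => E'.symm.map_smul (f * s) w
      have s4 : ∀ z, (Module.AEval.of K V φ).symm ((f * s : K[X]) • z)
          = Polynomial.aeval φ (f * s) • (Module.AEval.of K V φ).symm z :=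
        fun z => Module.AEval.of_symm_smul φ (f * s) z
      rw [hgdef]
      simp only [LinearEquiv.trans_apply]
      rw [s1, s2, hΨ, s3, s4]
      rfl
    have hcomp1 : g.toLinearMap * g.symm.toLinearMap = 1 :=
      LinearMap.ext fun v => by simp [Module.End.mul_apply]
    have hcomp2 : g.symm.toLinearMap * g.toLinearMap = 1 :=
      LinearMap.ext fun v => by simp [Module.End.mul_apply]
    set Gm : Matrix (Fin n) (Fin n) K := T.symm g.toLinearMap with hGm
    set Gm' : Matrix (Fin n) (Fin n) K := T.symm g.symm.toLinearMap with hGm'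
    have hu1 : Gm * Gm' = 1 := by rw [hGm, hGm', ← map_mul, hcomp1, map_one]
    have hu2 : Gm' * Gm = 1 := by rw [hGm, hGm', ← map_mul, hcomp2, map_one]
    refine ⟨⟨Gm, Gm', hu1, hu2⟩, ?_⟩
    have hend : g.toLinearMap * (Polynomial.aeval φ f)
        = (Polynomial.aeval φ (f * s)) * g.toLinearMap :=
      LinearMap.ext fun v => hgkey v
    have hmat : Gm * Polynomial.aeval X f = Polynomial.aeval X (f * s) * Gm := by
      have h1 := congrArg T.symm hend
      rw [map_mul, map_mul] at h1
      have h2 : T.symm (Polynomial.aeval φ f) = Polynomial.aeval X f := by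
        rw [haeval, AlgEquiv.symm_apply_apply]
      have h3 : T.symm (Polynomial.aeval φ (f * s)) = Polynomial.aeval X (f * s) := by
        rw [haeval, AlgEquiv.symm_apply_apply]
      rw [h2, h3] at h1
      exact h1
    show Gm' * Polynomial.aeval X (f * s) * Gm = Polynomial.aeval X f
    rw [mul_assoc, ← hmat, ← mul_assoc, hu2, one_mul]
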